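/- Let h₁, h₂ : [a₀,b₀] → ℂ be continuous and jointly non-degenerate (|h₁(t)|² + |h₂(t)|² ≥ η² for all t, η > 0). Then for every ε > 0 there is δ > 0 such that for every continuous d with ‖d‖_∞ ≤ δ there exist continuous z₁, z₂ : [a₀,b₀] → ℂ with |z₁(t)|, |z₂(t)| ≤ ε and h₁(t) z₁(t) + h₂(t) z₂(t) + z₁(t) z₂(t) = d(t) for all t; moreover δ can be chosen depending only on ε and η, not on the interval. -/

import Mathlib

lemma re_cpow_half_nonneg (z : ℂ) : 0 ≤ (z ^ (1/2 : ℂ)).re := by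
  rcases eq_or_ne z 0 with rfl | hz
  · rw [Complex.zero_cpow (by norm_num)]; simp
  · rw [Complex.cpow_def_of_ne_zero hz, Complex.exp_re]
    apply mul_nonneg (Real.exp_nonneg _)
    apply Real.cos_nonneg_of_mem_Icc
    have him : (Complex.log z * (1/2)).im = z.arg / 2 := by
      simp [Complex.mul_im, Complex.log_im]; ring
    rw [him]
    constructor
    · nlinarith [Complex.neg_pi_lt_arg z, Real.pi_pos]
    · nlinarith [Complex.arg_le_pi z]

theorem stmt_17 (η ε : ℝ) (hη : 0 < η) (hε : 0 < ε) :
    ∃ δ : ℝ, 0 < δ ∧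
      ∀ (a₀ b₀ : ℝ), a₀ < b₀ →
        ∀ h₁ h₂ : ℝ → ℂ, ContinuousOn h₁ (Set.Icc a₀ b₀) → ContinuousOn h₂ (Set.Icc a₀ b₀) →
          (∀ t ∈ Set.Icc a₀ b₀,
            η ^ 2 ≤ (‖h₁ t‖) ^ 2 + (‖h₂ t‖) ^ 2) →
          ∀ d : ℝ → ℂ, ContinuousOn d (Set.Icc a₀ b₀) →
            (∀ t ∈ Set.Icc a₀ b₀, ‖d t‖ ≤ δ) →
            ∃ z₁ z₂ : ℝ → ℂ, ContinuousOn z₁ (Set.Icc a₀ b₀) ∧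
              ContinuousOn z₂ (Set.Icc a₀ b₀) ∧
              (∀ t ∈ Set.Icc a₀ b₀, ‖z₁ t‖ ≤ ε ∧ ‖z₂ t‖ ≤ ε ∧
                h₁ t * z₁ t + h₂ t * z₂ t + z₁ t * z₂ t = d t) := by
  refine ⟨min (η^2/4) (ε*η/2), lt_min (by positivity) (by positivity), ?_⟩
  set δ := min (η^2/4) (ε*η/2) with hδdef
  have hδpos : 0 < δ := lt_min (by positivity) (by positivity)
  have hδ1 : δ ≤ η^2/4 := min_le_left _ _
  have hδ2 : δ ≤ ε*η/2 := min_le_right _ _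
  clear_value δ
  intro a₀ b₀ _hab h₁ h₂ hc1 hc2 hnd d hcd hd
  set I := Set.Icc a₀ b₀ with hIdef
  set S : ℝ → ℝ := fun t => (‖h₁ t‖)^2 + (‖h₂ t‖)^2 with hSdef
  set C : ℝ → ℂ := fun t => (starRingEnd ℂ) (h₁ t) * (starRingEnd ℂ) (h₂ t) with hCdef
  set v : ℝ → ℂ := fun t => 4 * C t * d t / (S t : ℂ)^2 with hvdef
  set s : ℝ → ℂ := fun t => (1 + v t) ^ (1/2 : ℂ) with hsdef
  set w : ℝ → ℂ := fun t => 2 * d t / ((S t : ℂ) * (1 + s t)) with hwdef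
  clear_value S C v s w
  have hnd' : ∀ t ∈ I, η ^ 2 ≤ S t := by
    intro t ht; rw [hSdef]; exact hnd t ht
  have hSpos : ∀ t ∈ I, 0 < S t := by
    intro t ht
    have h1 := hnd' t ht
    have h2 : (0:ℝ) < η^2 := by positivity
    linarith
  have hSne : ∀ t ∈ I, (S t : ℂ) ≠ 0 := fun t ht =>
    Complex.ofReal_ne_zero.2 (ne_of_gt (hSpos t ht))
  have hCle : ∀ t, ‖C t‖ ≤ S t / 2 := by
    intro t
    simp only [hCdef, hSdef, norm_mul, Complex.norm_conj]
    nlinarith [sq_nonneg (‖h₁ t‖ - ‖h₂ t‖),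
      norm_nonneg (h₁ t), norm_nonneg (h₂ t)]
  have hvle : ∀ t ∈ I, ‖v t‖ ≤ 1/2 := by
    intro t ht
    have hS := hSpos t ht
    have hSη := hnd' t ht
    have hdle := hd t ht
    have hd4 : ‖d t‖ ≤ S t / 4 := by linarith
    have habs : ‖v t‖ = 4 * ‖C t‖ * ‖d t‖ / (S t)^2 := by
      simp [hvdef, norm_div, norm_mul, norm_pow, Complex.norm_real, abs_of_pos hS]
    rw [habs, div_le_iff₀ (by positivity)]
    nlinarith [mul_le_mul (hCle t) hd4 (norm_nonneg (d t))
      (by positivity : (0:ℝ) ≤ S t / 2)]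
  have hone_le : ∀ t ∈ I, 1 ≤ ‖1 + s t‖ := by
    intro t ht
    have hre : 0 ≤ (s t).re := by
      simp only [hsdef]; exact re_cpow_half_nonneg _
    have h1 : 1 ≤ (‖1 + s t‖)^2 := by
      rw [Complex.sq_norm, Complex.normSq_apply]
      simp only [Complex.add_re, Complex.add_im, Complex.one_re, Complex.one_im]
      nlinarith [sq_nonneg ((s t).im), sq_nonneg ((s t).re)]
    nlinarith [norm_nonneg (1 + s t)]
  have h1sne : ∀ t ∈ I, (1 : ℂ) + s t ≠ 0 := by
    intro t ht h
    have := hone_le t ht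
    rw [h] at this; simp at this; linarith
  have hsq : ∀ t ∈ I, (s t)^2 = 1 + v t := by
    intro t ht
    have hne : (1 : ℂ) + v t ≠ 0 := by
      intro h
      have hv1 : v t = -1 := by linear_combination h
      have : ‖v t‖ = 1 := by simp [hv1]
      linarith [hvle t ht]
    have := Complex.cpow_nat_inv_pow (1 + v t) (n := 2) (by norm_num)
    simpa [hsdef, show ((2:ℕ):ℂ)⁻¹ = 1/2 by norm_num] using this
  have hDne : ∀ t ∈ I, (S t : ℂ) * (1 + s t) ≠ 0 :=
    fun t ht => mul_ne_zero (hSne t ht) (h1sne t ht)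
  -- continuity
  have hScont : ContinuousOn (fun t => ((S t : ℝ) : ℂ)) I := by
    simp only [hSdef]
    apply Complex.continuous_ofReal.comp_continuousOn
    exact ((continuous_norm.comp_continuousOn hc1).pow 2).add
      ((continuous_norm.comp_continuousOn hc2).pow 2)
  have hCcont : ContinuousOn C I := by
    rw [hCdef]
    exact (Complex.continuous_conj.comp_continuousOn hc1).mul
      (Complex.continuous_conj.comp_continuousOn hc2)
  have hvcont : ContinuousOn v I := by
    rw [hvdef]
    apply ContinuousOn.div ((continuousOn_const.mul hCcont).mul hcd) (hScont.pow 2)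
    exact fun t ht => pow_ne_zero 2 (hSne t ht)
  have hscont : ContinuousOn s I := by
    rw [hsdef]
    apply ContinuousOn.cpow (continuousOn_const.add hvcont) continuousOn_const
    intro t ht
    rw [Complex.mem_slitPlane_iff]
    left
    have h1 : |(v t).re| ≤ ‖v t‖ := Complex.abs_re_le_norm _
    have := hvle t ht
    simp only [Pi.add_apply, Complex.add_re, Complex.one_re]
    cases abs_le.mp h1 with
    | intro hl hr => linarith
  have hwcont : ContinuousOn w I := by
    rw [hwdef]
    exact ContinuousOn.div (continuousOn_const.mul hcd)
      (hScont.mul (continuousOn_const.add hscont)) hDne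
  refine ⟨fun t => (starRingEnd ℂ) (h₁ t) * w t, fun t => (starRingEnd ℂ) (h₂ t) * w t,
    (Complex.continuous_conj.comp_continuousOn hc1).mul hwcont,
    (Complex.continuous_conj.comp_continuousOn hc2).mul hwcont, ?_⟩
  intro t ht
  have hS := hSpos t ht
  have hSη := hnd' t ht
  have hdle := hd t ht
  have h1s := hone_le t ht
  have hwle : ‖w t‖ ≤ 2 * δ / S t := by
    have habs : ‖w t‖ = 2 * ‖d t‖ / (S t * ‖1 + s t‖) := by
      simp [hwdef, norm_div, norm_mul, norm_pow, Complex.norm_real, abs_of_pos hS]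
    rw [habs]
    apply div_le_div₀ (by positivity) (by linarith) hS
    nlinarith [norm_nonneg (d t)]
  have key : ∀ g : ℝ → ℂ, ‖g t‖^2 ≤ S t →
      ‖(starRingEnd ℂ) (g t) * w t‖ ≤ ε := by
    intro g hg
    rw [norm_mul, Complex.norm_conj]
    have h1 : ‖g t‖ * ‖w t‖ ≤ ‖g t‖ * (2 * δ / S t) :=
      mul_le_mul_of_nonneg_left hwle (norm_nonneg _)
    refine h1.trans ?_
    rw [mul_div_assoc', div_le_iff₀ hS]
    nlinarith [sq_nonneg (η - ‖g t‖),
      mul_nonneg (sub_nonneg.2 (show 2*δ ≤ ε*η by linarith)) (norm_nonneg (g t)),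
      mul_nonneg hε.le (sq_nonneg (η - ‖g t‖))]
  have hb1 : ‖h₁ t‖^2 ≤ S t := by
    simp only [hSdef]; nlinarith [sq_nonneg (‖h₂ t‖)]
  have hb2 : ‖h₂ t‖^2 ≤ S t := by
    simp only [hSdef]; nlinarith [sq_nonneg (‖h₁ t‖)]
  refine ⟨key h₁ hb1, key h₂ hb2, ?_⟩
  have hSc : h₁ t * (starRingEnd ℂ) (h₁ t) + h₂ t * (starRingEnd ℂ) (h₂ t) = (S t : ℂ) := by
    simp only [Complex.mul_conj, hSdef, Complex.sq_norm]
    push_cast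
    ring
  have hv' : v t * (S t : ℂ)^2 = 4 * C t * d t := by
    simp only [hvdef]
    exact div_mul_cancel₀ _ (pow_ne_zero 2 (hSne t ht))
  have hmain : (S t : ℂ) * w t + C t * (w t)^2 = d t := by
    have hs2 := hsq t ht
    have hD := hDne t ht
    have hD2 : ((S t : ℂ) * (1 + s t))^2 ≠ 0 := pow_ne_zero 2 hD
    simp only [hwdef]
    rw [mul_div_assoc', div_pow, mul_div_assoc',
      div_add_div _ _ hD hD2, div_eq_iff (mul_ne_zero hD hD2)]
    linear_combination (-((S t:ℂ)*(1 + s t)) * d t * (S t:ℂ)^2) * hs2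
      - ((S t:ℂ)*(1 + s t)) * d t * hv'
  calc h₁ t * ((starRingEnd ℂ) (h₁ t) * w t) + h₂ t * ((starRingEnd ℂ) (h₂ t) * w t)
        + ((starRingEnd ℂ) (h₁ t) * w t) * ((starRingEnd ℂ) (h₂ t) * w t)
      = (h₁ t * (starRingEnd ℂ) (h₁ t) + h₂ t * (starRingEnd ℂ) (h₂ t)) * w t
        + C t * (w t)^2 := by rw [hCdef]; ring
    _ = (S t : ℂ) * w t + C t * (w t)^2 := by rw [hSc]
    _ = d t := hmain
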